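/- Assume F has bounded variation along x̄ uniformly over A with cumulative variation function η and δ-perturbed functions η^δ_ε, and that hypotheses (C1) and (C2) hold. For each i, let 𝒯_i = {t₀^i = S < t₁^i < … < t_{N_i}^i = T} be a partition of [S,T], let m₀^i be given vectors and {d_j^i}_{j=1}^{N_i−1} given coefficients, and define the piecewise constant function m_i(t) := m₀^i + Σ_{j=1}^{N_i−2} d_j^i 𝟙_{[t_j^i, t_{j+1}^i)}(t) + d_{N_i−1}^i 𝟙_{[t_{N_i−1}^i, T]}(t). Assume: (A1) diam 𝒯_i → 0 as i → ∞; (A2) the sequence {m₀^i} is bounded; (A3) there exists a function (ε,δ) ↦ I(ε,δ) of positive values into the integers such that, for every ε > 0 and δ > 0, |d_j^i| ≤ η^δ_ε(t_j^i) − η^δ_ε(t_{j−1}^i) for all j ∈ {1,…,N_i} and all i ≥ I(ε,δ). Then there exist a function of bounded variation m : [S,T] → ℝ^n which is right continuous on (S,T), and a countable set 𝒜 ⊂ (S,T), such that along some subsequence m_i(t) → m(t) for all t ∈ [S,T] \ 𝒜, and |m(t) − m(s)| ≤ η*(t) − η*(s) for all [s,t] ⊂ [S,T], where η* is the normalized cumulative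 variation: η*(t) := η(t) for t ∈ {S,T} and η*(t) := lim_{s↓t} η(s) for t ∈ (S,T). -/

import Mathlib

open Set Metric Filter MeasureTheory
open scoped ENNReal Topology Classical

noncomputable section

/-- Euclidean space `ℝ^n`. -/
abbrev Eucl (n : ℕ) : Type := EuclideanSpace ℝ (Fin n)

/-- A (strict) partition `a = τ 0 < τ 1 < ⋯ < τ N = b` of the interval `[a,b]`. -/
def IsPartition (a b : ℝ) (N : ℕ) (τ : ℕ → ℝ) : Prop :=
  0 < N ∧ τ 0 = a ∧ τ N = b ∧ ∀ i < N, τ i < τ (i + 1)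

/-- The mesh (diameter) of the partition `τ` is at most `ε`. -/
def MeshLE (N : ℕ) (τ : ℕ → ℝ) (ε : ℝ) : Prop :=
  ∀ i < N, τ (i + 1) - τ i ≤ ε

/-- The tube `x̄([s,t]) + δ B` around the arc `x̄` on `[s,t]`. -/
def tube {n : ℕ} (xbar : ℝ → Eucl n) (s t δ : ℝ) : Set (Eucl n) :=
  {y | ∃ r ∈ Icc s t, dist y (xbar r) ≤ δ}

/-- `I^δ(𝒯) = Σᵢ sup { d_H (F(t_{i+1},x,a), F(t_i,x,a)) : x ∈ x̄([t_i,t_{i+1}]) + δB, a ∈ A }`. -/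
def variSum {n k : ℕ} (F : ℝ → Eucl n → Eucl k → Set (Eucl n)) (xbar : ℝ → Eucl n)
    (A : Set (Eucl k)) (δ : ℝ) (N : ℕ) (τ : ℕ → ℝ) : ℝ≥0∞ :=
  ∑ i ∈ Finset.range N,
    ⨆ x ∈ tube xbar (τ i) (τ (i + 1)) δ, ⨆ a ∈ A,
      EMetric.hausdorffEdist (F (τ (i + 1)) x a) (F (τ i) x a)

/-- `η^δ_ε(t)`: the `(δ,ε)`-perturbed cumulative variation of `F` along `x̄`, uniformly
over `A`, on the base interval `[S,t]`.  (For `t = S` there are no partitions and the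
supremum is `0`.) -/
def etaE {n k : ℕ} (F : ℝ → Eucl n → Eucl k → Set (Eucl n)) (xbar : ℝ → Eucl n)
    (A : Set (Eucl k)) (S δ ε t : ℝ) : ℝ≥0∞ :=
  ⨆ (N : ℕ) (τ : ℕ → ℝ) (_ : IsPartition S t N τ) (_ : MeshLE N τ ε),
    variSum F xbar A δ N τ

/-- `η^δ(t) = lim_{ε ↓ 0} η^δ_ε(t)` (the limit of a monotone family: the infimum). -/
def etaD {n k : ℕ} (F : ℝ → Eucl n → Eucl k → Set (Eucl n)) (xbar : ℝ → Eucl n)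
    (A : Set (Eucl k)) (S δ t : ℝ) : ℝ≥0∞ :=
  ⨅ (ε : ℝ) (_ : 0 < ε), etaE F xbar A S δ ε t

/-- `η(t) = lim_{δ ↓ 0} η^δ(t)`: the cumulative variation function of `F` along `x̄`,
uniformly over `A`. -/
def eta {n k : ℕ} (F : ℝ → Eucl n → Eucl k → Set (Eucl n)) (xbar : ℝ → Eucl n)
    (A : Set (Eucl k)) (S t : ℝ) : ℝ≥0∞ :=
  ⨅ (δ : ℝ) (_ : 0 < δ), etaD F xbar A S δ t

/-- Hypothesis (C1): nonempty closed values, measurability in `t`, and uniform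
boundedness `F(t,x,a) ⊆ cB` near the arc. -/
def HypC1 {n k : ℕ} (F : ℝ → Eucl n → Eucl k → Set (Eucl n)) (xbar : ℝ → Eucl n)
    (A : Set (Eucl k)) (S T δbar : ℝ) : Prop :=
  (∀ t x a, (F t x a).Nonempty ∧ IsClosed (F t x a)) ∧
  (∀ (x : Eucl n) (a : Eucl k), ∀ U : Set (Eucl n), IsOpen U →
     MeasurableSet {t | t ∈ Icc S T ∧ (F t x a ∩ U).Nonempty}) ∧
  (∃ c > (0 : ℝ), ∀ t ∈ Icc S T, ∀ a ∈ A, ∀ x : Eucl n, dist x (xbar t) ≤ δbar →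
     F t x a ⊆ closedBall 0 c)

/-- Hypothesis (C2): `F(t,x,a) ⊆ F(t,x',a') + γ(|x-x'| + |a-a'|)B` near the arc, where
`γ` is a modulus of continuity. -/
def HypC2 {n k : ℕ} (F : ℝ → Eucl n → Eucl k → Set (Eucl n)) (xbar : ℝ → Eucl n)
    (A : Set (Eucl k)) (S T δbar : ℝ) (γ : ℝ → ℝ) : Prop :=
  ContinuousOn γ (Ici 0) ∧ MonotoneOn γ (Ici 0) ∧ γ 0 = 0 ∧ (∀ r ≥ (0 : ℝ), 0 ≤ γ r) ∧
  ∀ t ∈ Icc S T, ∀ x x' : Eucl n, ∀ a ∈ A, ∀ a' ∈ A,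
    dist x (xbar t) ≤ δbar → dist x' (xbar t) ≤ δbar →
    ∀ y ∈ F t x a, ∃ z ∈ F t x' a', dist y z ≤ γ (dist x x' + dist a a')

end

noncomputable section

/-- The piecewise-constant function
`m(t) = m₀ + Σ_{j=1}^{N-2} d_j 𝟙_{[τ_j, τ_{j+1})}(t) + d_{N-1} 𝟙_{[τ_{N-1}, T]}(t)`. -/
def stepFun {n : ℕ} (T : ℝ) (N : ℕ) (τ : ℕ → ℝ) (m0 : Eucl n) (d : ℕ → Eucl n)
    (t : ℝ) : Eucl n :=
  m0 + (∑ j ∈ Finset.Icc 1 (N - 2), Set.indicator (Set.Ico (τ j) (τ (j + 1))) (fun _ => d j) t)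
     + Set.indicator (Set.Icc (τ (N - 1)) T) (fun _ => d (N - 1)) t

end

noncomputable section

/-- The normalized cumulative variation function: `η*(t) = η(t)` at the endpoints and
`η*(t) = lim_{s ↓ t} η(s)` (the right limit, i.e. the infimum over `s ∈ (t,T]`) for
`t ∈ (S,T)`. -/
def etaStar {n k : ℕ} (F : ℝ → Eucl n → Eucl k → Set (Eucl n)) (xbar : ℝ → Eucl n)
    (A : Set (Eucl k)) (S T t : ℝ) : ℝ≥0∞ :=
  if t = S ∨ t = T then eta F xbar A S t else ⨅ s ∈ Ioc t T, eta F xbar A S s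

end


noncomputable section
namespace Stmt11Aux

/-- strict monotonicity of a partition -/
theorem partition_lt {a b : ℝ} {N : ℕ} {τ : ℕ → ℝ} (h : IsPartition a b N τ)
    {i j : ℕ} (hij : i < j) (hjN : j ≤ N) : τ i < τ j := by
  induction j with
  | zero => omega
  | succ j ih =>
    rcases Nat.lt_or_ge i j with h'|h'
    · exact (ih h' (by omega)).trans (h.2.2.2 j (by omega))
    · have : i = j := by omega
      subst this; exact h.2.2.2 i (by omega)

theorem partition_le {a b : ℝ} {N : ℕ} {τ : ℕ → ℝ} (h : IsPartition a b N τ)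
    {i j : ℕ} (hij : i ≤ j) (hjN : j ≤ N) : τ i ≤ τ j := by
  rcases Nat.lt_or_ge i j with h'|h'
  · exact (partition_lt h h' hjN).le
  · have : i = j := by omega
    simp [this]

theorem partition_mem {a b : ℝ} {N : ℕ} {τ : ℕ → ℝ} (h : IsPartition a b N τ)
    {j : ℕ} (hjN : j ≤ N) : a ≤ τ j ∧ τ j ≤ b := by
  constructor
  · rw [← h.2.1]; exact partition_le h (Nat.zero_le _) hjN
  · rw [← h.2.2.1]; exact partition_le h hjN le_rfl

theorem not_isPartition_self {a : ℝ} {N : ℕ} {τ : ℕ → ℝ} (h : IsPartition a a N τ) : False := by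
  have := partition_lt h (i := 0) h.1 le_rfl
  rw [h.2.1, h.2.2.1] at this
  exact lt_irrefl _ this

variable {n k : ℕ} {F : ℝ → Eucl n → Eucl k → Set (Eucl n)} {xbar : ℝ → Eucl n}
  {A : Set (Eucl k)} {S δ ε : ℝ}

theorem etaE_self : etaE F xbar A S δ ε S = 0 := by
  refine le_antisymm ?_ zero_le
  refine iSup_le fun N => iSup_le fun τ => iSup_le fun hp => ?_
  exact absurd hp (fun h => not_isPartition_self h)

theorem etaE_neg {t : ℝ} (ht : t ≤ S) : etaE F xbar A S δ ε t = 0 := by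
  refine le_antisymm ?_ zero_le
  refine iSup_le fun N => iSup_le fun τ => iSup_le fun hp => ?_
  exfalso
  have := partition_lt hp (i := 0) hp.1 le_rfl
  rw [hp.2.1, hp.2.2.1] at this
  linarith

theorem etaE_mono (hε : 0 < ε) : Monotone (etaE F xbar A S δ ε) := by
  intro t₁ t₂ h12
  rcases eq_or_lt_of_le h12 with rfl|hlt
  · exact le_rfl
  refine iSup_le fun N => iSup_le fun τ => iSup_le fun hp => iSup_le fun hm => ?_
  classical
  set M : ℕ := ⌈(t₂ - t₁) / ε⌉₊ with hM
  have hMpos : 0 < M := by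
    rw [hM]
    exact Nat.ceil_pos.mpr (div_pos (by linarith) hε)
  set h : ℝ := (t₂ - t₁) / M with hh
  have hhpos : 0 < h := by
    rw [hh]
    exact div_pos (by linarith) (by exact_mod_cast hMpos)
  set τ' : ℕ → ℝ := fun j => if j ≤ N then τ j else t₁ + (j - N : ℕ) * h with hτ'
  have hτ'eq : ∀ j ≤ N, τ' j = τ j := fun j hj => if_pos hj
  have hτ'gt : ∀ j, N < j → τ' j = t₁ + (j - N : ℕ) * h := fun j hj => if_neg (by omega)
  have hcast : ∀ i, N ≤ i → ((i + 1 - N : ℕ) : ℝ) = ((i - N : ℕ) : ℝ) + 1 := by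
    intro i hi
    have : i + 1 - N = (i - N) + 1 := by omega
    rw [this]; push_cast; ring
  have hp' : IsPartition S t₂ (N + M) τ' := by
    refine ⟨by omega, by rw [hτ'eq 0 (Nat.zero_le _), hp.2.1], ?_, ?_⟩
    · rw [hτ'gt (N + M) (by omega)]
      have h1 : ((N + M - N : ℕ) : ℝ) = (M : ℝ) := by
        congr 1; omega
      rw [h1, hh]
      field_simp
      ring
    · intro i hi
      rcases Nat.lt_or_ge i N with h'|h'
      · rw [hτ'eq i (by omega), hτ'eq (i+1) (by omega)]
        exact hp.2.2.2 i h'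
      rcases Nat.eq_or_lt_of_le h' with h''|h''
      · subst h''
        rw [hτ'eq N le_rfl, hτ'gt (N+1) (by omega), hp.2.2.1]
        have h1 : ((N + 1 - N : ℕ) : ℝ) = 1 := by
          have : N + 1 - N = 1 := by omega
          rw [this]; norm_num
        rw [h1]
        nlinarith
      · rw [hτ'gt i h'', hτ'gt (i+1) (by omega), hcast i h']
        nlinarith
  have hm' : MeshLE (N + M) τ' ε := by
    intro i hi
    rcases Nat.lt_or_ge i N with h'|h'
    · rw [hτ'eq i (by omega), hτ'eq (i+1) (by omega)]
      exact hm i h'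
    have hhle : h ≤ ε := by
      rw [hh, div_le_iff₀ (by exact_mod_cast hMpos)]
      have := Nat.le_ceil ((t₂ - t₁) / ε)
      rw [← hM] at this
      calc t₂ - t₁ = ((t₂ - t₁) / ε) * ε := by field_simp
        _ ≤ (M : ℝ) * ε := by
            apply mul_le_mul_of_nonneg_right this hε.le
        _ = ε * M := by ring
    rcases Nat.eq_or_lt_of_le h' with h''|h''
    · subst h''
      rw [hτ'eq N le_rfl, hτ'gt (N+1) (by omega)]
      have h1 : ((N + 1 - N : ℕ) : ℝ) = 1 := by
        have : N + 1 - N = 1 := by omega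
        rw [this]; norm_num
      rw [h1]
      have : τ N = t₁ := hp.2.2.1
      linarith
    · rw [hτ'gt i h'', hτ'gt (i+1) (by omega), hcast i h']
      linarith
  have hsum : variSum F xbar A δ N τ ≤ variSum F xbar A δ (N + M) τ' := by
    unfold variSum
    have heq : ∀ i ∈ Finset.range N,
        (⨆ x ∈ tube xbar (τ i) (τ (i + 1)) δ, ⨆ a ∈ A,
          EMetric.hausdorffEdist (F (τ (i + 1)) x a) (F (τ i) x a))
        = ⨆ x ∈ tube xbar (τ' i) (τ' (i + 1)) δ, ⨆ a ∈ A,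
          EMetric.hausdorffEdist (F (τ' (i + 1)) x a) (F (τ' i) x a) := by
      intro i hi
      rw [Finset.mem_range] at hi
      rw [hτ'eq i (by omega), hτ'eq (i+1) (by omega)]
    rw [Finset.sum_congr rfl heq]
    exact Finset.sum_le_sum_of_subset (Finset.range_subset_range.mpr (by omega))
  calc variSum F xbar A δ N τ ≤ variSum F xbar A δ (N + M) τ' := hsum
    _ ≤ etaE F xbar A S δ ε t₂ :=
        le_iSup_of_le (N + M) (le_iSup_of_le τ' (le_iSup_of_le hp' (le_iSup_of_le hm' le_rfl)))


def stepFun' {n : ℕ} (T : ℝ) (N : ℕ) (τ : ℕ → ℝ) (m0 : Eucl n) (d : ℕ → Eucl n)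
    (t : ℝ) : Eucl n :=
  m0 + (∑ j ∈ Finset.Icc 1 (N - 2), Set.indicator (Set.Ico (τ j) (τ (j + 1))) (fun _ => d j) t)
     + Set.indicator (Set.Icc (τ (N - 1)) T) (fun _ => d (N - 1)) t

def Jdx (N : ℕ) (τ : ℕ → ℝ) (t : ℝ) : ℕ := Nat.findGreatest (fun j => τ j ≤ t) (N - 1)

variable {S T : ℝ} {N : ℕ} {τ : ℕ → ℝ}

theorem Jdx_le (t : ℝ) : Jdx N τ t ≤ N - 1 := Nat.findGreatest_le _

theorem tau_Jdx_le (t : ℝ) (h0 : τ 0 ≤ t) : τ (Jdx N τ t) ≤ t := by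
  have h := Nat.findGreatest_spec (P := fun j => τ j ≤ t) (n := N - 1) (Nat.zero_le _) h0
  exact h

theorem lt_tau_of_Jdx_lt {t : ℝ} {j : ℕ} (hj : Jdx N τ t < j) (hj' : j ≤ N - 1) : t < τ j :=
  not_le.mp (Nat.findGreatest_is_greatest hj hj')

theorem Jdx_mono {s t : ℝ} (h0 : τ 0 ≤ s) (hst : s ≤ t) : Jdx N τ s ≤ Jdx N τ t :=
  Nat.le_findGreatest (Jdx_le s) ((tau_Jdx_le s h0).trans hst)

theorem stepFun_eval {n : ℕ} (hp : IsPartition S T N τ) (hN : 2 ≤ N)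
    {m0 : Eucl n} {d : ℕ → Eucl n} {t : ℝ} (htS : S ≤ t) (htT : t ≤ T) :
    stepFun' T N τ m0 d t = m0 + (if Jdx N τ t = 0 then 0 else d (Jdx N τ t)) := by
  classical
  have h0 : τ 0 ≤ t := by rw [hp.2.1]; exact htS
  set J := Jdx N τ t with hJdef
  have hJle : J ≤ N - 1 := Jdx_le t
  have hτJ : τ J ≤ t := tau_Jdx_le t h0
  rcases Nat.eq_zero_or_pos J with hJ0|hJpos
  · -- J = 0 : t < τ 1
    have h1N : 1 ≤ N - 1 := by omega
    have ht1 : t < τ 1 := lt_tau_of_Jdx_lt (N := N) (by omega) h1N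
    rw [hJ0]
    simp only [if_pos rfl]
    have hsum : (∑ j ∈ Finset.Icc 1 (N - 2),
        Set.indicator (Set.Ico (τ j) (τ (j + 1))) (fun _ => d j) t) = 0 := by
      apply Finset.sum_eq_zero
      intro j hj
      rw [Finset.mem_Icc] at hj
      apply Set.indicator_of_notMem
      intro hmem
      have : τ 1 ≤ τ j := partition_le hp hj.1 (by omega)
      exact absurd hmem.1 (by linarith)
    have hlast : Set.indicator (Set.Icc (τ (N - 1)) T) (fun _ => d (N - 1)) t = 0 := by
      apply Set.indicator_of_notMem
      intro hmem
      have : τ 1 ≤ τ (N - 1) := partition_le hp h1N (by omega)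
      exact absurd hmem.1 (by linarith)
    rw [stepFun', hsum, hlast]
    simp
  · have h1J : 1 ≤ J := hJpos
    rw [if_neg (by omega)]
    rcases Nat.eq_or_lt_of_le hJle with hJN|hJN
    · -- J = N - 1
      have hτN1 : τ (N - 1) ≤ t := hJN ▸ hτJ
      have hlast : Set.indicator (Set.Icc (τ (N - 1)) T) (fun _ => d (N - 1)) t
          = d (N - 1) := by
        exact Set.indicator_of_mem (Set.mem_Icc.mpr ⟨hτN1, htT⟩) _
      have hsum : (∑ j ∈ Finset.Icc 1 (N - 2),
          Set.indicator (Set.Ico (τ j) (τ (j + 1))) (fun _ => d j) t) = 0 := by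
        apply Finset.sum_eq_zero
        intro j hj
        rw [Finset.mem_Icc] at hj
        apply Set.indicator_of_notMem
        intro hmem
        have h1 : τ (j + 1) ≤ τ (N - 1) := partition_le hp (by omega) (by omega)
        have h2 : τ (j + 1) ≤ t := le_trans h1 hτN1
        exact absurd hmem.2 (by linarith)
      rw [stepFun', hsum, hlast, hJN]
      abel
    · -- J < N - 1, so t < τ (J + 1)
      have htJ1 : t < τ (J + 1) := lt_tau_of_Jdx_lt (N := N) (by omega) (by omega)
      have hlast : Set.indicator (Set.Icc (τ (N - 1)) T) (fun _ => d (N - 1)) t = 0 := by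
        apply Set.indicator_of_notMem
        intro hmem
        have : τ (J + 1) ≤ τ (N - 1) := partition_le hp (by omega) (by omega)
        exact absurd hmem.1 (by linarith)
      have hsum : (∑ j ∈ Finset.Icc 1 (N - 2),
          Set.indicator (Set.Ico (τ j) (τ (j + 1))) (fun _ => d j) t) = d J := by
        have hJmem : J ∈ Finset.Icc 1 (N - 2) := by
          rw [Finset.mem_Icc]; omega
        rw [Finset.sum_eq_single_of_mem J hJmem]
        · exact Set.indicator_of_mem (Set.mem_Ico.mpr ⟨hτJ, htJ1⟩) _
        · intro j hj hne
          rw [Finset.mem_Icc] at hj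
          apply Set.indicator_of_notMem
          intro hmem
          rcases Nat.lt_or_ge j J with h'|h'
          · have : τ (j + 1) ≤ τ J := partition_le hp (by omega) (by omega)
            exact absurd hmem.2 (by linarith)
          · have hj' : J + 1 ≤ j := by omega
            have : τ (J + 1) ≤ τ j := partition_le hp hj' (by omega)
            exact absurd hmem.1 (by linarith)
      rw [stepFun', hsum, hlast]
      abel

theorem add_le_of_le_tsub {a b x : ℝ≥0∞} (hba : b ≤ a) (h : x ≤ a - b) : x + b ≤ a := by
  rcases eq_or_ne b ⊤ with rfl|hb
  · rw [top_le_iff.mp hba]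
    exact le_top
  · calc x + b ≤ (a - b) + b := add_le_add_left h b
      _ = a := tsub_add_cancel_of_le hba

theorem master {n : ℕ} {g : ℝ → ℝ≥0∞} (hg : Monotone g) (hgS : g S = 0)
    (hp : IsPartition S T N τ) (hN : 2 ≤ N) {m0 : Eucl n} {d : ℕ → Eucl n}
    (hd : ∀ j, 1 ≤ j → j ≤ N → ENNReal.ofReal ‖d j‖ ≤ g (τ j) - g (τ (j - 1)))
    (s t s' : ℝ) (hs : S ≤ s) (hst : s ≤ t) (ht : t ≤ T)
    (hs' : S ≤ s') (hcase : s' = S ∨ (s' < s ∧ ∀ j < N, τ (j + 1) - τ j ≤ (s - s') / 2)) :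
    ENNReal.ofReal ‖stepFun' T N τ m0 d t - stepFun' T N τ m0 d s‖ + g s' ≤ g t := by
  classical
  have hs'le : s' ≤ s := by rcases hcase with rfl|⟨h, _⟩ <;> linarith
  have hsT : s ≤ T := le_trans hst ht
  have htS : S ≤ t := le_trans hs hst
  rw [stepFun_eval hp hN hs hsT, stepFun_eval hp hN htS ht]
  set Js := Jdx N τ s with hJs
  set Jt := Jdx N τ t with hJt
  have h0s : τ 0 ≤ s := by rw [hp.2.1]; exact hs
  have hJsJt : Js ≤ Jt := Jdx_mono h0s hst
  have hsimp : m0 + (if Jt = 0 then 0 else d Jt) - (m0 + (if Js = 0 then 0 else d Js))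
      = (if Jt = 0 then 0 else d Jt) - (if Js = 0 then 0 else d Js) := by
    abel
  rw [hsimp]
  rcases Nat.eq_or_lt_of_le hJsJt with hEq|hLt
  · rw [hEq]
    simp only [sub_self, norm_zero, ENNReal.ofReal_zero, zero_add]
    exact hg (le_trans hs'le hst)
  · -- Js < Jt
    have hJtpos : 1 ≤ Jt := by omega
    have hJtle : Jt ≤ N - 1 := Jdx_le t
    have hJsle : Js ≤ N - 1 := Jdx_le s
    have hτJt : τ Jt ≤ t := tau_Jdx_le t (by rw [hp.2.1]; exact htS)
    have key1 : ENNReal.ofReal ‖d Jt‖ + g (τ (Jt - 1)) ≤ g (τ Jt) :=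
      add_le_of_le_tsub (hg (partition_le hp (by omega) (by omega)))
        (hd Jt hJtpos (by omega))
    have hgt : g (τ Jt) ≤ g t := hg hτJt
    rw [if_neg (by omega)]
    rcases Nat.eq_zero_or_pos Js with hJs0|hJspos
    · -- Js = 0
      have hs'' : g s' ≤ g (τ (Jt - 1)) := by
        rcases hcase with rfl|⟨hlt', hmesh⟩
        · rw [hgS]; exact zero_le
        · -- derive contradiction : s < τ 1 but τ 1 < s
          exfalso
          have h1N : 1 ≤ N - 1 := by omega
          have hst1 : s < τ 1 := lt_tau_of_Jdx_lt (N := N) (by omega) h1N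
          have hτ0 : τ 0 = S := hp.2.1
          have := hmesh 0 (by omega)
          linarith
      rw [hJs0, if_pos rfl, sub_zero]
      calc ENNReal.ofReal ‖d Jt‖ + g s'
          ≤ ENNReal.ofReal ‖d Jt‖ + g (τ (Jt - 1)) := add_le_add_right hs'' _
        _ ≤ g (τ Jt) := key1
        _ ≤ g t := hgt
    · -- 1 ≤ Js
      rw [if_neg (by omega)]
      have htri : ENNReal.ofReal ‖d Jt - d Js‖
          ≤ ENNReal.ofReal ‖d Jt‖ + ENNReal.ofReal ‖d Js‖ := by
        rw [← ENNReal.ofReal_add (norm_nonneg _) (norm_nonneg _)]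
        exact ENNReal.ofReal_le_ofReal (norm_sub_le _ _)
      have key2 : ENNReal.ofReal ‖d Js‖ + g (τ (Js - 1)) ≤ g (τ Js) :=
        add_le_of_le_tsub (hg (partition_le hp (by omega) (by omega)))
          (hd Js hJspos (by omega))
      have hs'' : g s' ≤ g (τ (Js - 1)) := by
        rcases hcase with rfl|⟨hlt', hmesh⟩
        · rw [hgS]; exact zero_le
        · apply hg
          have hJsN : Js < N - 1 := by omega
          have hsτ : s < τ (Js + 1) := lt_tau_of_Jdx_lt (N := N) (by omega) (by omega)
          have h1 := hmesh Js (by omega)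
          have h2 := hmesh (Js - 1) (by omega)
          have h3 : Js - 1 + 1 = Js := by omega
          rw [h3] at h2
          linarith
      calc ENNReal.ofReal ‖d Jt - d Js‖ + g s'
          ≤ (ENNReal.ofReal ‖d Jt‖ + ENNReal.ofReal ‖d Js‖) + g (τ (Js - 1)) :=
            add_le_add htri hs''
        _ = ENNReal.ofReal ‖d Jt‖ + (ENNReal.ofReal ‖d Js‖ + g (τ (Js - 1))) := by
            rw [add_assoc]
        _ ≤ ENNReal.ofReal ‖d Jt‖ + g (τ Js) := add_le_add_right key2 _
        _ ≤ ENNReal.ofReal ‖d Jt‖ + g (τ (Jt - 1)) :=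
            add_le_add_right (hg (partition_le hp (by omega) (by omega))) _
        _ ≤ g (τ Jt) := key1
        _ ≤ g t := hgt

end Stmt11Aux
end

noncomputable section
namespace Stmt11Aux

theorem ennreal_add_toReal {x : ℝ} {a b : ℝ≥0∞} (hx : 0 ≤ x) (hb : b ≠ ⊤)
    (h : ENNReal.ofReal x + a ≤ b) : x + a.toReal ≤ b.toReal := by
  have ha : a ≠ ⊤ := ne_top_of_le_ne_top hb (le_trans le_add_self h)
  have h2 := ENNReal.toReal_mono hb h
  rwa [ENNReal.toReal_add ENNReal.ofReal_ne_top ha, ENNReal.toReal_ofReal hx] at h2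

end Stmt11Aux
end

set_option maxHeartbeats 4000000 in
open Stmt11Aux in
/-- interpolation lemma.  Given partitions `𝒯_i` of `[S,T]` with mesh
tending to `0`, bounded initial values `m₀^i`, and jumps `d_j^i` dominated by the
increments of the perturbed cumulative variation functions, some subsequence of the
piecewise constant functions `m_i` converges, off a countable set, to a function `m` of
bounded variation, right continuous on `(S,T)`, whose increments are dominated by those
of the normalized cumulative variation function `η*`. -/
theorem stmt11 {n k : ℕ} (S T : ℝ) (hST : S < T)
    (A : Set (Eucl k)) (hA : IsCompact A)
    (F : ℝ → Eucl n → Eucl k → Set (Eucl n))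
    (xbar : ℝ → Eucl n) (hx : ContinuousOn xbar (Icc S T))
    (hBV : eta F xbar A S T < ⊤)
    (δbar : ℝ) (hδbar : 0 < δbar) (hfin : etaD F xbar A S δbar T < ⊤)
    (hC1 : HypC1 F xbar A S T δbar)
    (γ : ℝ → ℝ) (hC2 : HypC2 F xbar A S T δbar γ)
    (N : ℕ → ℕ) (τ : ℕ → ℕ → ℝ) (hpart : ∀ i, IsPartition S T (N i) (τ i))
    (m0 : ℕ → Eucl n) (d : ℕ → ℕ → Eucl n)
    (hA1 : ∀ ε > (0 : ℝ), ∃ I0 : ℕ, ∀ i ≥ I0, MeshLE (N i) (τ i) ε)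
    (hA2 : ∃ M : ℝ, ∀ i, ‖m0 i‖ ≤ M)
    (I : ℝ → ℝ → ℕ)
    (hA3 : ∀ ε > (0 : ℝ), ∀ δ > (0 : ℝ), ∀ i ≥ I ε δ, ∀ j : ℕ, 1 ≤ j → j ≤ N i →
      ENNReal.ofReal ‖d i j‖ ≤
        etaE F xbar A S δ ε (τ i j) - etaE F xbar A S δ ε (τ i (j - 1))) :
    ∃ (m : ℝ → Eucl n) (𝒜 : Set ℝ) (φ : ℕ → ℕ),
      BoundedVariationOn m (Icc S T) ∧
      (∀ t ∈ Ioo S T, ContinuousWithinAt m (Ici t) t) ∧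
      𝒜.Countable ∧ 𝒜 ⊆ Ioo S T ∧ StrictMono φ ∧
      (∀ t ∈ Icc S T \ 𝒜,
        Tendsto (fun i => stepFun T (N (φ i)) (τ (φ i)) (m0 (φ i)) (d (φ i)) t)
          atTop (𝓝 (m t))) ∧
      (∀ s t : ℝ, S ≤ s → s ≤ t → t ≤ T →
        ENNReal.ofReal ‖m t - m s‖ ≤
          etaStar F xbar A S T t - etaStar F xbar A S T s) := by
  classical
  obtain ⟨M0, hM0⟩ := hA2
  -- a finite level
  have hex : ∃ ε₀ > (0:ℝ), etaE F xbar A S δbar ε₀ T < ⊤ := by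
    by_contra hcon
    push_neg at hcon
    have htop : etaD F xbar A S δbar T = ⊤ := by
      refine le_antisymm le_top ?_
      exact le_iInf fun ε => le_iInf fun hε => hcon ε hε
    rw [htop] at hfin
    exact absurd hfin (lt_irrefl _)
  obtain ⟨ε₀, hε₀, hfin₀⟩ := hex
  set g0 : ℝ → ℝ≥0∞ := etaE F xbar A S δbar ε₀ with hg0def
  have hg0mono : Monotone g0 := etaE_mono hε₀
  have hg0T : g0 T ≠ ⊤ := hfin₀.ne
  have hg0fin : ∀ t, t ≤ T → g0 t ≠ ⊤ := fun t ht => ne_top_of_le_ne_top hg0T (hg0mono ht)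
  set G : ℝ → ℝ := fun t => (g0 (min t T)).toReal with hGdef
  have hGmono : Monotone G := by
    intro a b hab
    exact ENNReal.toReal_mono (hg0fin _ (min_le_right _ _))
      (hg0mono (min_le_min hab le_rfl))
  have hGg0 : ∀ t, t ≤ T → G t = (g0 t).toReal := by
    intro t ht
    rw [hGdef]
    simp [min_eq_left ht]
  -- mesh small forces at least two intervals
  obtain ⟨i₂, hi₂⟩ := hA1 ((T - S)/2) (by linarith)
  have hN2 : ∀ i, i₂ ≤ i → 2 ≤ N i := by
    intro i hi
    by_contra hcon
    have hNi : N i = 1 := by have := (hpart i).1; omega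
    have hm := hi₂ i hi 0 (by omega)
    have h0 := (hpart i).2.1
    have h1 := (hpart i).2.2.1
    rw [hNi] at h1
    linarith
  set i₀ : ℕ := max (I ε₀ δbar) i₂ with hi₀def
  set mf : ℕ → ℝ → Eucl n := fun i => stepFun T (N i) (τ i) (m0 i) (d i) with hmfdef
  have hstep_eq : ∀ i t, mf i t = stepFun' T (N i) (τ i) (m0 i) (d i) t := fun i t => rfl
  -- uniform bound
  set R : ℝ := M0 + (g0 T).toReal with hRdef
  have hbdd : ∀ i, i₀ ≤ i → ∀ t ∈ Icc S T, ‖mf i t‖ ≤ R := by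
    intro i hi t ht
    have hi2 : i₂ ≤ i := le_trans (le_max_right _ _) hi
    have hiI : I ε₀ δbar ≤ i := le_trans (le_max_left _ _) hi
    rw [hstep_eq, stepFun_eval (hpart i) (hN2 i hi2) ht.1 ht.2]
    have hg0Tnn : 0 ≤ (g0 T).toReal := ENNReal.toReal_nonneg
    by_cases hJ : Jdx (N i) (τ i) t = 0
    · rw [if_pos hJ, add_zero]
      calc ‖m0 i‖ ≤ M0 := hM0 i
        _ ≤ R := by rw [hRdef]; linarith
    · rw [if_neg hJ]
      set J := Jdx (N i) (τ i) t
      have hJle : J ≤ N i - 1 := Jdx_le t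
      have h1 : ENNReal.ofReal ‖d i J‖ ≤ g0 (τ i J) - g0 (τ i (J - 1)) :=
        hA3 ε₀ hε₀ δbar hδbar i hiI J (by omega) (by omega)
      have h2 : g0 (τ i J) - g0 (τ i (J - 1)) ≤ g0 T :=
        le_trans tsub_le_self (hg0mono ((partition_mem (hpart i) (by omega)).2))
      have h3 : ‖d i J‖ ≤ (g0 T).toReal :=
        (ENNReal.ofReal_le_iff_le_toReal hg0T).mp (le_trans h1 h2)
      calc ‖m0 i + d i J‖ ≤ ‖m0 i‖ + ‖d i J‖ := norm_add_le _ _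
        _ ≤ M0 + (g0 T).toReal := add_le_add (hM0 i) h3
        _ = R := rfl
  -- the countable dense-from-the-right set D
  set D : Set ℝ := insert S (insert T {x | x ∈ Ioo S T ∧ ∃ q : ℚ, (q:ℝ) = x}) with hDdef
  have hDcount : D.Countable := by
    apply Set.Countable.insert
    apply Set.Countable.insert
    apply Set.Countable.mono _ (countable_range (fun q : ℚ => (q:ℝ)))
    rintro x ⟨-, q, hq⟩
    exact ⟨q, hq⟩
  have hSD : S ∈ D := by rw [hDdef]; left; rfl
  have hTD : T ∈ D := by rw [hDdef]; right; left; rfl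
  have hDsub : D ⊆ Icc S T := by
    rintro x (rfl|rfl|⟨hx', -⟩)
    · exact ⟨le_rfl, hST.le⟩
    · exact ⟨hST.le, le_rfl⟩
    · exact ⟨hx'.1.le, hx'.2.le⟩
  have hDbtw : ∀ a b : ℝ, S ≤ a → a < b → b ≤ T → ∃ q ∈ D, a < q ∧ q < b := by
    intro a b hSa hab hbT
    obtain ⟨q, hq1, hq2⟩ := exists_rat_btwn hab
    refine ⟨(q:ℝ), ?_, hq1, hq2⟩
    rw [hDdef]
    right; right
    exact ⟨⟨lt_of_le_of_lt hSa hq1, lt_of_lt_of_le hq2 hbT⟩, q, rfl⟩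
  -- extract a pointwise convergent subsequence on D
  haveI : Countable ↥D := hDcount.to_subtype
  have hKcompact : IsCompact (Set.pi (univ : Set ↥D) fun _ => closedBall (0 : Eucl n) R) :=
    isCompact_univ_pi fun _ => isCompact_closedBall _ _
  have hmem : ∀ j : ℕ, (fun q : ↥D => mf (j + i₀) q.1) ∈
      Set.pi (univ : Set ↥D) fun _ => closedBall (0 : Eucl n) R := by
    intro j
    rw [Set.mem_univ_pi]
    intro q
    rw [mem_closedBall_zero_iff]
    exact hbdd (j + i₀) (by omega) q.1 (hDsub q.2)
  obtain ⟨L, -, φ', hφ'mono, hφ'conv⟩ := hKcompact.tendsto_subseq hmem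
  set φ : ℕ → ℕ := fun j => φ' j + i₀ with hφdef
  have hφmono : StrictMono φ := fun a b hab => by
    simp only [hφdef]
    exact Nat.add_lt_add_right (hφ'mono hab) i₀
  have hφtop : Tendsto φ atTop atTop := hφmono.tendsto_atTop
  set mtil : ℝ → Eucl n := fun t => limUnder atTop fun j => mf (φ j) t with hmtildef
  set Conv : Set ℝ := {x | x ∈ Icc S T ∧ Tendsto (fun j => mf (φ j) x) atTop (𝓝 (mtil x))}
    with hConvdef
  have hDConv : D ⊆ Conv := by
    intro q hq
    have h1 : Tendsto (fun j => mf (φ j) q) atTop (𝓝 (L ⟨q, hq⟩)) := by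
      have h2 := tendsto_pi_nhds.mp hφ'conv ⟨q, hq⟩
      exact h2
    refine ⟨hDsub hq, ?_⟩
    have h3 : mtil q = L ⟨q, hq⟩ := h1.limUnder_eq
    rw [h3]
    exact h1
  -- the master estimate, eventually along the subsequence
  have key : ∀ δ ε : ℝ, 0 < δ → 0 < ε → ∀ s t s' : ℝ, S ≤ s → s ≤ t → t ≤ T → S ≤ s' →
      (s' = S ∨ s' < s) → ∀ᶠ j in atTop,
      ENNReal.ofReal ‖mf (φ j) t - mf (φ j) s‖ + etaE F xbar A S δ ε s'
        ≤ etaE F xbar A S δ ε t := by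
    intro δ ε hδ hε s t s' hSs hst htT hSs' hcase
    have hall : ∀ i, I ε δ ≤ i → i₂ ≤ i →
        (s' = S ∨ (s' < s ∧ ∀ j < N i, τ i (j+1) - τ i j ≤ (s - s')/2)) →
        ENNReal.ofReal ‖mf i t - mf i s‖ + etaE F xbar A S δ ε s'
          ≤ etaE F xbar A S δ ε t := by
      intro i h1 h2 hc
      rw [hstep_eq, hstep_eq]
      exact master (etaE_mono hε) etaE_self (hpart i) (hN2 i h2)
        (fun j hj1 hj2 => hA3 ε hε δ hδ i h1 j hj1 hj2) s t s' hSs hst htT hSs' hc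
    rcases hcase with rfl|hlt
    · filter_upwards [hφtop.eventually_ge_atTop (I ε δ), hφtop.eventually_ge_atTop i₂]
        with j h1 h2
      exact hall (φ j) h1 h2 (Or.inl rfl)
    · obtain ⟨i₃, hi₃⟩ := hA1 ((s - s')/2) (by linarith)
      filter_upwards [hφtop.eventually_ge_atTop (I ε δ), hφtop.eventually_ge_atTop i₂,
        hφtop.eventually_ge_atTop i₃] with j h1 h2 h3
      exact hall (φ j) h1 h2 (Or.inr ⟨hlt, hi₃ _ h3⟩)
  -- its limit version on Conv
  have E1 : ∀ δ ε : ℝ, 0 < δ → 0 < ε → ∀ a b s' : ℝ, a ∈ Conv → b ∈ Conv → a ≤ b →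
      S ≤ s' → (s' = S ∨ s' < a) →
      ENNReal.ofReal ‖mtil b - mtil a‖ + etaE F xbar A S δ ε s'
        ≤ etaE F xbar A S δ ε b := by
    intro δ ε hδ hε a b s' ha hb hab hSs' hcase
    have hconv : Tendsto
        (fun j => ENNReal.ofReal ‖mf (φ j) b - mf (φ j) a‖ + etaE F xbar A S δ ε s')
        atTop (𝓝 (ENNReal.ofReal ‖mtil b - mtil a‖ + etaE F xbar A S δ ε s')) :=
      (((ENNReal.continuous_ofReal.tendsto _).comp ((hb.2.sub ha.2).norm)).add
        tendsto_const_nhds)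
    exact le_of_tendsto hconv (key δ ε hδ hε a b s' ha.1.1 hab hb.1.2 hSs' hcase)
  -- real-valued version at the finite level
  have E1R : ∀ a b s' : ℝ, a ∈ Conv → b ∈ Conv → a ≤ b → b ≤ T → S ≤ s' →
      (s' = S ∨ s' < a) → ‖mtil b - mtil a‖ ≤ G b - G s' := by
    intro a b s' ha hb hab hbT hSs' hcase
    have h := E1 δbar ε₀ hδbar hε₀ a b s' ha hb hab hSs' hcase
    have hs'T : s' ≤ T := by
      rcases hcase with rfl|h' 
      · exact hST.le
      · linarith [hab, hbT]
    have h2 := ennreal_add_toReal (norm_nonneg _) (hg0fin b hbT) h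
    rw [← hGg0 b hbT, ← hGg0 s' hs'T] at h2
    linarith
  -- convergence at continuity points of G off D
  have hConvGood : ∀ t, t ∈ Icc S T → t ∉ D → ContinuousAt G t → t ∈ Conv := by
    intro t htIcc htD hcont
    have htS : t ≠ S := fun h => htD (h ▸ hSD)
    have htT : t ≠ T := fun h => htD (h ▸ hTD)
    have htIoo : t ∈ Ioo S T :=
      ⟨lt_of_le_of_ne htIcc.1 (Ne.symm htS), lt_of_le_of_ne htIcc.2 htT⟩
    have hcau : CauchySeq (fun j => mf (φ j) t) := by
      rw [Metric.cauchySeq_iff]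
      intro ε' hε'
      obtain ⟨δ', hδ'pos, hδ'⟩ := continuousAt_iff.mp hcont (ε'/8) (by linarith)
      set s' : ℝ := max S (t - δ'/2) with hs'def
      have hs'S : S ≤ s' := le_max_left _ _
      have hs'lt : s' < t := max_lt htIoo.1 (by linarith)
      have hds' : dist s' t < δ' := by
        rw [Real.dist_eq, abs_of_nonpos (by linarith)]
        have h := le_max_right S (t - δ'/2)
        rw [← hs'def] at h
        linarith
      have hGs' : G t - G s' < ε'/8 := by
        have h := hδ' hds'
        rw [Real.dist_eq] at h
        have h2 := abs_lt.mp h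
        linarith [h2.1, h2.2]
      obtain ⟨q, hqD, hq1, hq2⟩ := hDbtw s' t hs'S hs'lt htIcc.2
      have hkey := key δbar ε₀ hδbar hε₀ q t s' (hDsub hqD).1 hq2.le htIcc.2 hs'S (Or.inr hq1)
      rw [eventually_atTop] at hkey
      obtain ⟨K₁, hK₁⟩ := hkey
      have hcq : CauchySeq (fun j => mf (φ j) q) := (hDConv hqD).2.cauchySeq
      obtain ⟨K₂, hK₂⟩ := Metric.cauchySeq_iff.mp hcq (ε'/2) (by linarith)
      refine ⟨max K₁ K₂, fun a ha b hb => ?_⟩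
      have hreal : ∀ c, K₁ ≤ c → ‖mf (φ c) t - mf (φ c) q‖ ≤ G t - G s' := by
        intro c hc
        have h2 := ennreal_add_toReal (norm_nonneg _) (hg0fin t htIcc.2) (hK₁ c hc)
        rw [← hGg0 t htIcc.2, ← hGg0 s' (by linarith [htIcc.2])] at h2
        linarith
      have h1 := hreal a (le_trans (le_max_left _ _) ha)
      have h2 := hreal b (le_trans (le_max_left _ _) hb)
      have h3 := hK₂ a (le_trans (le_max_right _ _) ha) b (le_trans (le_max_right _ _) hb)
      have e1 : dist (mf (φ a) t) (mf (φ a) q) < ε'/8 := by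
        rw [dist_eq_norm]; linarith
      have e2 : dist (mf (φ b) q) (mf (φ b) t) < ε'/8 := by
        rw [dist_eq_norm, norm_sub_rev]; linarith
      have e4 := dist_triangle4 (mf (φ a) t) (mf (φ a) q) (mf (φ b) q) (mf (φ b) t)
      linarith
    obtain ⟨x, hx⟩ := cauchySeq_tendsto_of_complete hcau
    refine ⟨htIcc, ?_⟩
    have hfix : mtil t = x := hx.limUnder_eq
    rw [hfix]
    exact hx
  -- the right-approach filters are nontrivial
  have hNeBot : ∀ t : ℝ, S ≤ t → t < T → (𝓝[>] t ⊓ 𝓟 D).NeBot := by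
    intro t hSt htT
    rw [← nhdsWithin_inter', ← mem_closure_iff_nhdsWithin_neBot, Metric.mem_closure_iff]
    intro ε' hε'
    obtain ⟨q, hqD, h1, h2⟩ := hDbtw t (min T (t + ε')) hSt (lt_min htT (by linarith))
      (min_le_left _ _)
    refine ⟨q, ⟨h1, hqD⟩, ?_⟩
    rw [Real.dist_eq, abs_of_nonpos (by linarith)]
    have h3 : q < t + ε' := lt_of_lt_of_le h2 (min_le_right _ _)
    linarith
  have hevD : ∀ t : ℝ, ∀ᶠ q in 𝓝[>] t ⊓ 𝓟 D, q ∈ D := fun t =>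
    eventually_iff.mpr (by simpa using mem_inf_of_right (mem_principal_self D))
  have hevIoo : ∀ t b : ℝ, t < b → ∀ᶠ q in 𝓝[>] t ⊓ 𝓟 D, q ∈ Ioo t b := fun t b h =>
    eventually_iff.mpr (by exact mem_inf_of_left (Ioo_mem_nhdsGT h))
  -- the exceptional set
  set AA : Set ℝ := {t | t ∈ Ioo S T ∧ ¬ContinuousAt G t} with hAAdef
  have hAAcount : AA.Countable := (hGmono.countable_not_continuousAt).mono fun t ht => ht.2
  have hAAsub : AA ⊆ Ioo S T := fun t ht => ht.1
  set m : ℝ → Eucl n := fun t => if t ∈ AA then limUnder (𝓝[>] t ⊓ 𝓟 D) mtil else mtil t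
    with hmdef
  have hmval : ∀ t, t ∉ AA → m t = mtil t := by
    intro t ht
    simp only [hmdef]
    rw [if_neg ht]
  have hmvalA : ∀ t, t ∈ AA → m t = limUnder (𝓝[>] t ⊓ 𝓟 D) mtil := by
    intro t ht
    simp only [hmdef]
    rw [if_pos ht]
  have hmS : m S = mtil S := hmval S fun h => lt_irrefl S (hAAsub h).1
  have hmT : m T = mtil T := hmval T fun h => lt_irrefl T (hAAsub h).2
  -- existence of right limits of mtil along D
  have hRLex : ∀ t ∈ Ioo S T, ∃ x, Tendsto mtil (𝓝[>] t ⊓ 𝓟 D) (𝓝 x) := by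
    intro t ht
    haveI := hNeBot t ht.1.le ht.2
    have hcauchy : Cauchy (Filter.map mtil (𝓝[>] t ⊓ 𝓟 D)) := by
      rw [Metric.cauchy_iff]
      refine ⟨map_neBot, ?_⟩
      intro ε' hε'
      have hGr := hGmono.tendsto_nhdsGT t
      set Gp : ℝ := sInf (G '' Ioi t) with hGpdef
      have hev : ∀ᶠ v in 𝓝[>] t, dist (G v) Gp < ε'/8 :=
        (Metric.tendsto_nhds.mp hGr) (ε'/8) (by linarith)
      obtain ⟨u, hu_gt, hu⟩ := mem_nhdsGT_iff_exists_Ioo_subset.mp hev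
      set u' : ℝ := min u T with hu'def
      have hu't : t < u' := lt_min hu_gt ht.2
      have hkey2 : ∀ x y : ℝ, x ∈ D → y ∈ D → x ∈ Ioo t u' → y ∈ Ioo t u' → x ≤ y →
          dist (mtil x) (mtil y) < ε' := by
        intro x y hxD hyD hxm hym hxy
        have hyT : y ≤ T := hym.2.le.trans (min_le_right _ _)
        have hE := E1R x y ((t + x)/2) (hDConv hxD) (hDConv hyD) hxy hyT
          (by linarith [ht.1, hxm.1]) (Or.inr (by linarith [hxm.1]))
        have hys : y ∈ Ioo t u := ⟨hym.1, lt_of_lt_of_le hym.2 (min_le_left _ _)⟩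
        have hxu : x < u := lt_of_lt_of_le hxm.2 (min_le_left _ _)
        have hss : (t + x)/2 ∈ Ioo t u := ⟨by linarith [hxm.1], by linarith [hxm.1]⟩
        have e1 : dist (G y) Gp < ε'/8 := hu hys
        have e2 : dist (G ((t + x)/2)) Gp < ε'/8 := hu hss
        rw [Real.dist_eq] at e1 e2
        have e1' := abs_lt.mp e1
        have e2' := abs_lt.mp e2
        rw [dist_eq_norm, norm_sub_rev]
        have hnn : (0:ℝ) ≤ ‖mtil y - mtil x‖ := norm_nonneg _
        linarith [e1'.1, e1'.2, e2'.1, e2'.2]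
      refine ⟨mtil '' (D ∩ Ioo t u'), ?_, ?_⟩
      · apply image_mem_map
        exact inter_mem (mem_inf_of_right (mem_principal_self D))
          (mem_inf_of_left (Ioo_mem_nhdsGT hu't))
      · rintro x ⟨qx, ⟨hqxD, hqx⟩, rfl⟩ y ⟨qy, ⟨hqyD, hqy⟩, rfl⟩
        rcases le_total qx qy with h|h
        · exact hkey2 qx qy hqxD hqyD hqx hqy h
        · rw [dist_comm]
          exact hkey2 qy qx hqyD hqxD hqy hqx h
    obtain ⟨x, hx⟩ := CompleteSpace.complete hcauchy
    exact ⟨x, hx⟩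
  -- m is the right limit of mtil at every interior point
  have hmRL : ∀ t, t ∈ Ioo S T → Tendsto mtil (𝓝[>] t ⊓ 𝓟 D) (𝓝 (m t)) := by
    intro t ht
    haveI := hNeBot t ht.1.le ht.2
    by_cases hAt : t ∈ AA
    · obtain ⟨x, hx⟩ := hRLex t ht
      have hfix : m t = x := by rw [hmvalA t hAt]; exact hx.limUnder_eq
      rw [hfix]
      exact hx
    · have hcont : ContinuousAt G t := by
        by_contra hc
        exact hAt ⟨ht, hc⟩
      have htConv : t ∈ Conv := by
        by_cases htD : t ∈ D
        · exact hDConv htD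
        · exact hConvGood t ⟨ht.1.le, ht.2.le⟩ htD hcont
      rw [hmval t hAt, Metric.tendsto_nhds]
      intro ε' hε'
      obtain ⟨δ', hδ'pos, hδ'⟩ := continuousAt_iff.mp hcont (ε'/4) (by linarith)
      set s' : ℝ := max S (t - δ'/2) with hs'def
      have hs'S : S ≤ s' := le_max_left _ _
      have hs'lt : s' < t := max_lt ht.1 (by linarith)
      have hds' : dist s' t < δ' := by
        rw [Real.dist_eq, abs_of_nonpos (by linarith)]
        have h := le_max_right S (t - δ'/2)
        rw [← hs'def] at h
        linarith
      have hGs' : G t - G s' < ε'/4 := by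
        have h := hδ' hds'
        rw [Real.dist_eq] at h
        have h2 := abs_lt.mp h
        linarith [h2.1, h2.2]
      set δ'' : ℝ := min (δ'/2) (T - t) with hδ''def
      have hδ''pos : 0 < δ'' := lt_min (by linarith) (by linarith [ht.2])
      filter_upwards [hevIoo t (t + δ'') (by linarith), hevD t] with q hqIoo hqD
      have hqT : q ≤ T := by
        have h := min_le_right (δ'/2) (T - t)
        rw [← hδ''def] at h
        have h2 := hqIoo.2
        linarith
      have hE := E1R t q s' htConv (hDConv hqD) hqIoo.1.le hqT hs'S (Or.inr hs'lt)
      have hGq : G q - G t < ε'/4 := by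
        have hd : dist q t < δ' := by
          rw [Real.dist_eq, abs_of_nonneg (by linarith [hqIoo.1])]
          have h := min_le_left (δ'/2) (T - t)
          rw [← hδ''def] at h
          have h2 := hqIoo.2
          linarith
        have h3 := hδ' hd
        rw [Real.dist_eq] at h3
        have h2 := abs_lt.mp h3
        linarith [h2.1, h2.2]
      rw [dist_eq_norm]
      calc ‖mtil q - mtil t‖ ≤ G q - G s' := hE
        _ < ε' := by linarith
  -- E2 : right-approximation of m by values of mtil on D
  have E2 : ∀ u, u ∈ Icc S T → ∀ ε'' : ℝ, 0 < ε'' →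
      ∃ q ∈ D, u ≤ q ∧ q < u + ε'' ∧ dist (mtil q) (m u) ≤ ε'' := by
    intro u hu ε'' hε''
    by_cases huA : u = S ∨ u = T
    · rcases huA with h|h
      · subst h
        exact ⟨u, hSD, le_rfl, by linarith, by rw [hmS]; simp [hε''.le]⟩
      · subst h
        exact ⟨u, hTD, le_rfl, by linarith, by rw [hmT]; simp [hε''.le]⟩
    · push_neg at huA
      have huIoo : u ∈ Ioo S T :=
        ⟨lt_of_le_of_ne hu.1 (Ne.symm huA.1), lt_of_le_of_ne hu.2 huA.2⟩
      haveI := hNeBot u huIoo.1.le huIoo.2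
      have h1 := Metric.tendsto_nhds.mp (hmRL u huIoo) ε'' hε''
      obtain ⟨q, hq1, hq2, hq3⟩ :=
        (h1.and ((hevIoo u (u + ε'') (by linarith)).and (hevD u))).exists
      exact ⟨q, hq3, hq2.1.le, hq2.2, hq1.le⟩
  -- right continuity of m on the interior
  have hRC : ∀ t ∈ Ioo S T, ContinuousWithinAt m (Ici t) t := by
    intro t ht
    rw [continuousWithinAt_iff]
    intro ε' hε'
    haveI := hNeBot t ht.1.le ht.2
    have h1 := Metric.tendsto_nhds.mp (hmRL t ht) (ε'/3) (by linarith)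
    rw [eventually_iff, mem_inf_principal] at h1
    obtain ⟨u, hu_gt, hu⟩ := mem_nhdsGT_iff_exists_Ioo_subset.mp h1
    set δ₂ : ℝ := min (u - t) (T - t) with hδ₂def
    have htu : t < u := hu_gt
    have hδ₂pos : 0 < δ₂ := lt_min (by linarith) (by linarith [ht.2])
    refine ⟨δ₂/2, by linarith, ?_⟩
    intro v hv hvd
    rcases eq_or_lt_of_le (Set.mem_Ici.mp hv) with heq|hvt
    · rw [← heq]
      simpa using hε'
    · have hvd' : v - t < δ₂/2 := by
        rw [Real.dist_eq, abs_of_nonneg (by linarith)] at hvd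
        exact hvd
      have hδ₂T : δ₂ ≤ T - t := min_le_right _ _
      have hδ₂u : δ₂ ≤ u - t := min_le_left _ _
      have hvT : v < T := by linarith
      have hvS : S < v := lt_trans ht.1 hvt
      obtain ⟨q, hqD, hq1, hq2, hq3⟩ := E2 v ⟨hvS.le, hvT.le⟩
        (min (ε'/3) (t + δ₂ - v)) (lt_min (by linarith) (by linarith))
      have hq2' : q < t + δ₂ := by
        have h := min_le_right (ε'/3) (t + δ₂ - v)
        linarith
      have hqu : q < u := by linarith
      have hqt : t < q := lt_of_lt_of_le hvt hq1
      have h5 : dist (mtil q) (m t) < ε'/3 := hu ⟨hqt, hqu⟩ hqD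
      have h6 : dist (m v) (mtil q) ≤ ε'/3 := by
        rw [dist_comm]
        exact le_trans hq3 (min_le_left _ _)
      calc dist (m v) (m t) ≤ dist (m v) (mtil q) + dist (mtil q) (m t) := dist_triangle _ _ _
        _ < ε' := by linarith
  -- elementary facts about eta and etaStar
  have hetamono : Monotone (eta F xbar A S) := by
    intro t₁ t₂ h
    exact iInf_mono fun δ => iInf_mono fun hδ =>
      iInf_mono fun ε => iInf_mono fun hε => etaE_mono hε h
  have heta_le : ∀ (t δ ε : ℝ), 0 < δ → 0 < ε →
      eta F xbar A S t ≤ etaE F xbar A S δ ε t := by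
    intro t δ ε hδ hε
    calc eta F xbar A S t ≤ etaD F xbar A S δ t := iInf₂_le δ hδ
      _ ≤ etaE F xbar A S δ ε t := iInf₂_le ε hε
  have hetaS : eta F xbar A S S = 0 := by
    refine le_antisymm ?_ zero_le
    calc eta F xbar A S S ≤ etaE F xbar A S 1 1 S := heta_le S 1 1 one_pos one_pos
      _ = 0 := etaE_self
  have hstarS : etaStar F xbar A S T S = 0 := by
    rw [etaStar, if_pos (Or.inl rfl), hetaS]
  have hstarT : etaStar F xbar A S T T = eta F xbar A S T := by
    rw [etaStar, if_pos (Or.inr rfl)]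
  have hstarIoo : ∀ t ∈ Ioo S T,
      etaStar F xbar A S T t = ⨅ s ∈ Ioc t T, eta F xbar A S s := by
    intro t ht
    rw [etaStar, if_neg]
    push_neg
    exact ⟨ne_of_gt ht.1, ne_of_lt ht.2⟩
  have hstar_le : ∀ t ∈ Ioo S T, ∀ u ∈ Ioc t T,
      etaStar F xbar A S T t ≤ eta F xbar A S u := by
    intro t ht u hu
    rw [hstarIoo t ht]
    exact iInf₂_le u hu
  have hstarmono : ∀ s t, S ≤ s → s ≤ t → t ≤ T →
      etaStar F xbar A S T s ≤ etaStar F xbar A S T t := by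
    intro s t hSs hst htT
    rcases eq_or_lt_of_le hSs with rfl|hSs'
    · rw [hstarS]; exact zero_le
    rcases eq_or_lt_of_le htT with rfl|htT'
    · rcases eq_or_lt_of_le hst with rfl|hst'
      · exact le_rfl
      · rw [hstarT]
        exact hstar_le s ⟨hSs', hst'⟩ t ⟨hst', le_rfl⟩
    · rcases eq_or_lt_of_le hst with rfl|hst'
      · exact le_rfl
      · rw [hstarIoo t ⟨lt_trans hSs' hst', htT'⟩]
        refine le_iInf fun u => le_iInf fun hu => ?_
        exact hstar_le s ⟨hSs', lt_trans hst' htT'⟩ u ⟨lt_trans hst' hu.1, hu.2⟩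
  have hstarTtop : etaStar F xbar A S T T ≠ ⊤ := by rw [hstarT]; exact hBV.ne
  have hstartop : ∀ x, S ≤ x → x ≤ T → etaStar F xbar A S T x ≠ ⊤ := fun x h1 h2 =>
    ne_top_of_le_ne_top hstarTtop (hstarmono x T h1 h2 le_rfl)
  -- the main increment estimate for m
  have main : ∀ s t, S ≤ s → s ≤ t → t ≤ T →
      ENNReal.ofReal ‖m t - m s‖ + etaStar F xbar A S T s ≤ etaStar F xbar A S T t := by
    intro s t hSs hst htT
    rcases eq_or_lt_of_le hst with rfl|hst'
    · simp
    have ClaimA : ∀ b, b ∈ D → s < b → b ≤ T → ∀ δ ε : ℝ, 0 < δ → 0 < ε →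
        ENNReal.ofReal ‖mtil b - m s‖ + etaStar F xbar A S T s
          ≤ etaE F xbar A S δ ε b := by
      intro b hbD hsb hbT δ ε hδ hε
      rcases eq_or_lt_of_le hSs with rfl|hSs'
      · have h := E1 δ ε hδ hε S b S (hDConv hSD) (hDConv hbD) (hDsub hbD).1 le_rfl
          (Or.inl rfl)
        rw [etaE_self, add_zero] at h
        rw [hmS, hstarS, add_zero]
        exact h
      · have hsIoo : s ∈ Ioo S T := ⟨hSs', lt_of_lt_of_le hst' htT⟩
        haveI := hNeBot s hSs hsIoo.2
        have htendS := hmRL s hsIoo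
        have hconv2 : Tendsto
            (fun a => ENNReal.ofReal ‖mtil b - mtil a‖ + etaStar F xbar A S T s)
            (𝓝[>] s ⊓ 𝓟 D)
            (𝓝 (ENNReal.ofReal ‖mtil b - m s‖ + etaStar F xbar A S T s)) :=
          ((ENNReal.continuous_ofReal.tendsto _).comp
            ((tendsto_const_nhds.sub htendS).norm)).add tendsto_const_nhds
        apply le_of_tendsto hconv2
        filter_upwards [hevIoo s b hsb, hevD s] with a haIoo haD
        have hE := E1 δ ε hδ hε a b ((s + a)/2) (hDConv haD) (hDConv hbD) haIoo.2.le
          (by linarith [hsIoo.1, haIoo.1]) (Or.inr (by linarith [haIoo.1]))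
        have hx2 : etaStar F xbar A S T s ≤ etaE F xbar A S δ ε ((s + a)/2) := by
          refine le_trans (hstar_le s hsIoo ((s + a)/2)
            ⟨by linarith [haIoo.1], by linarith [haIoo.1, haIoo.2, hbT]⟩)
            (heta_le _ δ ε hδ hε)
        exact le_trans (add_le_add_right hx2 _) hE
    rcases eq_or_lt_of_le htT with rfl|htT'
    · rw [hstarT, hmT]
      refine le_iInf fun δ => le_iInf fun hδ => le_iInf fun ε => le_iInf fun hε => ?_
      exact ClaimA t hTD hst' le_rfl δ ε hδ hε
    · have htIoo : t ∈ Ioo S T := ⟨lt_of_le_of_lt hSs hst', htT'⟩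
      rw [hstarIoo t htIoo]
      refine le_iInf fun u => le_iInf fun hu => ?_
      refine le_iInf fun δ => le_iInf fun hδ => le_iInf fun ε => le_iInf fun hε => ?_
      haveI := hNeBot t htIoo.1.le htIoo.2
      have htend := hmRL t htIoo
      have hconv2 : Tendsto
          (fun b => ENNReal.ofReal ‖mtil b - m s‖ + etaStar F xbar A S T s)
          (𝓝[>] t ⊓ 𝓟 D)
          (𝓝 (ENNReal.ofReal ‖m t - m s‖ + etaStar F xbar A S T s)) :=
        ((ENNReal.continuous_ofReal.tendsto _).comp
          ((htend.sub tendsto_const_nhds).norm)).add tendsto_const_nhds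
      apply le_of_tendsto hconv2
      filter_upwards [hevIoo t u hu.1, hevD t] with b hbIoo hbD
      exact le_trans (ClaimA b hbD (lt_trans hst' hbIoo.1) (hbIoo.2.le.trans hu.2) δ ε hδ hε)
        (etaE_mono hε hbIoo.2.le)
  -- bounded variation
  have hBVm : BoundedVariationOn m (Icc S T) := by
    have hsum : ∀ (K : ℕ) (u : ℕ → ℝ), Monotone u → (∀ i, u i ∈ Icc S T) →
        (∑ i ∈ Finset.range K, edist (m (u (i+1))) (m (u i))) + etaStar F xbar A S T (u 0)
          ≤ etaStar F xbar A S T (u K) := by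
      intro K u hu hus
      induction K with
      | zero => simp
      | succ K ih =>
        rw [Finset.sum_range_succ, add_right_comm]
        have h1 : edist (m (u (K+1))) (m (u K)) = ENNReal.ofReal ‖m (u (K+1)) - m (u K)‖ := by
          rw [edist_dist, dist_eq_norm]
        calc (∑ i ∈ Finset.range K, edist (m (u (i+1))) (m (u i)))
              + etaStar F xbar A S T (u 0) + edist (m (u (K+1))) (m (u K))
            ≤ etaStar F xbar A S T (u K) + edist (m (u (K+1))) (m (u K)) :=
              add_le_add_left ih _
          _ = ENNReal.ofReal ‖m (u (K+1)) - m (u K)‖ + etaStar F xbar A S T (u K) := by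
              rw [h1, add_comm]
          _ ≤ etaStar F xbar A S T (u (K+1)) :=
              main (u K) (u (K+1)) (hus K).1 (hu (Nat.le_succ K)) (hus (K+1)).2
    have hle : eVariationOn m (Icc S T) ≤ etaStar F xbar A S T T := by
      apply iSup_le
      rintro ⟨K, u, hu, hus⟩
      calc (∑ i ∈ Finset.range K, edist (m (u (i+1))) (m (u i)))
          ≤ (∑ i ∈ Finset.range K, edist (m (u (i+1))) (m (u i)))
            + etaStar F xbar A S T (u 0) := le_add_right le_rfl
        _ ≤ etaStar F xbar A S T (u K) := hsum K u hu hus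
        _ ≤ etaStar F xbar A S T T := hstarmono (u K) T (hus K).1 (hus K).2 le_rfl
    exact ne_top_of_le_ne_top hstarTtop hle
  -- assemble
  refine ⟨m, AA, φ, hBVm, hRC, hAAcount, hAAsub, hφmono, ?_, ?_⟩
  · intro t ht
    have hmt : m t = mtil t := hmval t ht.2
    rw [hmt]
    by_cases htD : t ∈ D
    · exact (hDConv htD).2
    · have htS : t ≠ S := fun h => htD (h ▸ hSD)
      have htT2 : t ≠ T := fun h => htD (h ▸ hTD)
      have hcont : ContinuousAt G t := by
        by_contra hc
        exact ht.2 ⟨⟨lt_of_le_of_ne ht.1.1 (Ne.symm htS), lt_of_le_of_ne ht.1.2 htT2⟩, hc⟩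
      exact (hConvGood t ht.1 htD hcont).2
  · intro s t hSs hst htT
    exact ENNReal.le_sub_of_add_le_right (hstartop s hSs (hst.trans htT))
      (main s t hSs hst htT)
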